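/- Let p(X) = X⁷ − 23X⁴ − 28X³ − 33X² − 17X + 1 and let K = ℚ[X]/(p(X)) be the number field obtained by adjoining a root of p. Then K has exactly 3 real embeddings and exactly 2 pairs of complex conjugate embeddings, so by Dirichlet's Unit Theorem the unit group of the ring of integers 𝒪_K has rank 4. -/

import Mathlib

open Polynomial NumberField

/-- The polynomial `p(X) = X⁷ − 23X⁴ − 28X³ − 33X² − 17X + 1` over `ℚ`. -/
noncomputable def pQ : Polynomial ℚ :=
  X ^ 7 - 23 * X ^ 4 - 28 * X ^ 3 - 33 * X ^ 2 - 17 * X + 1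

/-- The same polynomial over `ℝ`. -/
noncomputable def pR : Polynomial ℝ :=
  X ^ 7 - 23 * X ^ 4 - 28 * X ^ 3 - 33 * X ^ 2 - 17 * X + 1

lemma pR_monic : pR.Monic := by unfold pR; monicity!

lemma pR_ne : pR ≠ 0 := pR_monic.ne_zero

lemma dpR : pR.derivative = 7*X^6 - 92*X^3 - 84*X^2 - 66*X - 17 := by
  unfold pR
  simp [derivative_pow, map_ofNat]
  ring

lemma ddpR : (7*X^6 - 92*X^3 - 84*X^2 - 66*X - 17 : Polynomial ℝ).derivative
    = 42*X^5 - 276*X^2 - 168*X - 66 := by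
  simp [derivative_pow, map_ofNat]
  ring

lemma q_ne : (42*X^5 - 276*X^2 - 168*X - 66 : Polynomial ℝ) ≠ 0 := fun h => by
  have := congrArg (eval 0) h
  simp at this

lemma q_root_gt {y : ℝ} (hy : (42*X^5 - 276*X^2 - 168*X - 66 : Polynomial ℝ).eval y = 0) :
    2 < y := by
  by_contra h
  push_neg at h
  simp only [eval_add, eval_sub, eval_mul, eval_pow, eval_X, eval_ofNat] at hy
  rcases le_or_gt y 0 with h0 | h0
  · nlinarith [mul_nonneg (neg_nonneg.2 h0) (sq_nonneg (y^2)), sq_nonneg (23*y + 7)]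
  · have h3 : y^3 ≤ 8 := by nlinarith
    have h2 : y^2 ≤ 2*y := by nlinarith
    nlinarith [mul_le_mul_of_nonneg_right h3 (sq_nonneg y)]

lemma mono2 : StrictMonoOn (fun x : ℝ => (42*X^5 - 276*X^2 - 168*X - 66 : Polynomial ℝ).eval x)
    (Set.Ici 2) := by
  apply strictMonoOn_of_deriv_pos (convex_Ici 2)
    ((42*X^5 - 276*X^2 - 168*X - 66 : Polynomial ℝ)).continuous.continuousOn
  intro x hx
  rw [interior_Ici, Set.mem_Ioi] at hx
  rw [Polynomial.deriv]
  have hd : (42*X^5 - 276*X^2 - 168*X - 66 : Polynomial ℝ).derivative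
      = 210*X^4 - 552*X - 168 := by
    simp [derivative_pow, map_ofNat]; ring
  rw [hd]
  simp only [eval_sub, eval_mul, eval_pow, eval_X, eval_ofNat]
  have hx0 : (0:ℝ) < x := by linarith
  have h3 : 8 ≤ x^3 := by
    nlinarith [sq_nonneg (x-2), mul_pos (mul_pos (sub_pos.2 hx) (sub_pos.2 hx)) (sub_pos.2 hx)]
  nlinarith [mul_le_mul_of_nonneg_right h3 hx0.le]

lemma card2 : (42*X^5 - 276*X^2 - 168*X - 66 : Polynomial ℝ).roots.toFinset.card ≤ 1 := by
  rw [Finset.card_le_one]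
  intro a ha b hb
  rw [Multiset.mem_toFinset, mem_roots q_ne] at ha hb
  exact mono2.injOn (Set.mem_Ici.2 (q_root_gt ha).le) (Set.mem_Ici.2 (q_root_gt hb).le)
    (by simpa using ha.trans hb.symm)

lemma pR_eval (x : ℝ) : pR.eval x = x^7 - 23*x^4 - 28*x^3 - 33*x^2 - 17*x + 1 := by
  simp [pR]

lemma card_pR : pR.roots.toFinset.card = 3 := by
  have upper : pR.roots.toFinset.card ≤ 3 := by
    have h1 := Polynomial.card_roots_toFinset_le_derivative pR
    have h2 := Polynomial.card_roots_toFinset_le_derivative pR.derivative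
    rw [dpR] at h1 h2
    rw [ddpR] at h2
    have := card2
    omega
  have lower : 3 ≤ pR.roots.toFinset.card := by
    obtain ⟨x1, hx1, hx1'⟩ : ∃ x ∈ Set.Ioo (-1:ℝ) 0, pR.eval x = 0 := by
      have h := intermediate_value_Ioo (by norm_num : (-1:ℝ) ≤ 0) pR.continuous.continuousOn
        (by rw [pR_eval, pR_eval]; norm_num : (0:ℝ) ∈ Set.Ioo (pR.eval (-1)) (pR.eval 0))
      exact ⟨h.choose, h.choose_spec.1, h.choose_spec.2⟩
    obtain ⟨x2, hx2, hx2'⟩ : ∃ x ∈ Set.Ioo (0:ℝ) 1, pR.eval x = 0 := by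
      have h := intermediate_value_Ioo' (by norm_num : (0:ℝ) ≤ 1) pR.continuous.continuousOn
        (by rw [pR_eval, pR_eval]; norm_num : (0:ℝ) ∈ Set.Ioo (pR.eval 1) (pR.eval 0))
      exact ⟨h.choose, h.choose_spec.1, h.choose_spec.2⟩
    obtain ⟨x3, hx3, hx3'⟩ : ∃ x ∈ Set.Ioo (1:ℝ) 4, pR.eval x = 0 := by
      have h := intermediate_value_Ioo (by norm_num : (1:ℝ) ≤ 4) pR.continuous.continuousOn
        (by rw [pR_eval, pR_eval]; norm_num : (0:ℝ) ∈ Set.Ioo (pR.eval 1) (pR.eval 4))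
      exact ⟨h.choose, h.choose_spec.1, h.choose_spec.2⟩
    have hsub : ({x1, x2, x3} : Finset ℝ) ⊆ pR.roots.toFinset := by
      intro y hy
      rw [Multiset.mem_toFinset, mem_roots pR_ne]
      rcases Finset.mem_insert.1 hy with h | h
      · exact h ▸ hx1'
      rcases Finset.mem_insert.1 h with h | h
      · exact h ▸ hx2'
      · rw [Finset.mem_singleton] at h; exact h ▸ hx3'
    have hc : ({x1, x2, x3} : Finset ℝ).card = 3 := by
      obtain ⟨_, h1b⟩ := hx1
      obtain ⟨h2a, h2b⟩ := hx2
      obtain ⟨h3a, _⟩ := hx3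
      rw [Finset.card_insert_of_notMem (by
          simp only [Finset.mem_insert, Finset.mem_singleton]
          push_neg
          constructor <;> intro h <;> nlinarith),
        Finset.card_insert_of_notMem (by
          simp only [Finset.mem_singleton]
          intro h; nlinarith),
        Finset.card_singleton]
    exact hc ▸ Finset.card_le_card hsub
  omega

lemma pQ_monic : pQ.Monic := by unfold pQ; monicity!
lemma pQ_ne : pQ ≠ 0 := pQ_monic.ne_zero
lemma pQ_natDegree : pQ.natDegree = 7 := by unfold pQ; compute_degree!

lemma pQ_map : pQ.map (algebraMap ℚ ℝ) = pR := by
  simp [pQ, pR, Polynomial.map_ofNat]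

/-- Real embeddings into `ℂ` correspond to embeddings into `ℝ`. -/
noncomputable def realEmbEquiv (K : Type) [Field K] :
    {φ : K →+* ℂ // ComplexEmbedding.IsReal φ} ≃ (K →+* ℝ) where
  toFun φ := φ.2.embedding
  invFun ψ := ⟨Complex.ofRealHom.comp ψ, by
    rw [ComplexEmbedding.isReal_iff]; ext x; simp⟩
  left_inv φ := by
    apply Subtype.ext
    ext x
    exact φ.2.coe_embedding_apply x
  right_inv ψ := by ext x; simp [ComplexEmbedding.IsReal.embedding]

/-- The number field `K = ℚ[X]/(p(X))` has exactly 3 real embeddings and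
exactly 2 pairs of complex conjugate embeddings, so by Dirichlet's Unit
Theorem its unit group has rank 4. -/
theorem nrRealPlaces_nrComplexPlaces_unitsRank
    (K : Type) [Field K] [NumberField K] (e : K ≃ₐ[ℚ] AdjoinRoot pQ) :
    InfinitePlace.nrRealPlaces K = 3 ∧ InfinitePlace.nrComplexPlaces K = 2 ∧
      Units.rank K = 4 := by
  classical
  have hfin : Module.finrank ℚ K = 7 := by
    rw [e.toLinearEquiv.finrank_eq, (AdjoinRoot.powerBasis' pQ_monic).finrank]
    simpa [AdjoinRoot.powerBasis'] using pQ_natDegree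
  have E : {φ : K →+* ℂ // ComplexEmbedding.IsReal φ} ≃ (pR.roots.toFinset : Finset ℝ) :=
    (realEmbEquiv K).trans <| (RingHom.equivRatAlgHom K ℝ).trans <|
      ((AlgEquiv.arrowCongr e AlgEquiv.refl).trans (AdjoinRoot.equiv ℝ ℚ pQ pQ_ne)).trans <|
      Equiv.subtypeEquivRight (fun x => by
        rw [aroots_def, pQ_map, Multiset.mem_toFinset])
  have hR : InfinitePlace.nrRealPlaces K = 3 := by
    rw [← InfinitePlace.card_real_embeddings, Fintype.card_congr E, Fintype.card_coe, card_pR]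
  have hsum := InfinitePlace.card_add_two_mul_card_eq_rank K
  rw [hfin] at hsum
  have hC : InfinitePlace.nrComplexPlaces K = 2 := by omega
  refine ⟨hR, hC, ?_⟩
  rw [Units.rank, InfinitePlace.card_eq_nrRealPlaces_add_nrComplexPlaces, hR, hC]
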